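/- Let k ≥ 2 be an integer, 0 < ε < 1, d > 0, and define a := (1 + (1 − 1/k)ε)·d and b := (1 − ε/k)·d. Let n > a be a real number, let γ ∈ [0,1], and define ã := a^γ · b^{1−γ}, b̃ := b, and R̃ := (ã/n)·(1 − b̃/n) / ((b̃/n)·(1 − ã/n)). Then (γ·ε)/2 ≤ log R̃ ≤ γ·ε·log 3 + a/(n − a). -/

import Mathlib

set_option autoImplicit false

open Real Set

lemma key_artanh (x : ℝ) (h0 : 0 ≤ x) (h1 : x ≤ 1/2) :
    Real.log (1+x) - Real.log (1-x) ≤ 2 * x * Real.log 3 := by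
  set f : ℝ → ℝ := fun y => 2*Real.log 3*y + Real.log (1-y) - Real.log (1+y) with hf
  have hcont : ContinuousOn f (Icc (0:ℝ) (1/2)) := by
    intro y hy
    obtain ⟨hy0, hy1⟩ := hy
    have h1y : (1:ℝ) - y ≠ 0 := by norm_num; linarith
    have h2y : (1:ℝ) + y ≠ 0 := by positivity
    apply ContinuousAt.continuousWithinAt
    fun_prop (disch := assumption)
  have hder : ∀ y ∈ Ioo (0:ℝ) (1/2),
      HasDerivAt f (2*Real.log 3 + (-(1-y)⁻¹ - (1+y)⁻¹)) y := by
    intro y hy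
    have h1y : (1:ℝ) - y ≠ 0 := by obtain ⟨a,b⟩ := hy; norm_num; linarith
    have h2y : (1:ℝ) + y ≠ 0 := by obtain ⟨a,b⟩ := hy; positivity
    have d1 : HasDerivAt (fun y : ℝ => Real.log (1-y)) ((1-y)⁻¹ * (-1)) y :=
      (Real.hasDerivAt_log h1y).comp y (((hasDerivAt_id y).const_sub 1))
    have d2 : HasDerivAt (fun y : ℝ => Real.log (1+y)) ((1+y)⁻¹ * 1) y :=
      (Real.hasDerivAt_log h2y).comp y (((hasDerivAt_id y).const_add 1))
    have d3 : HasDerivAt (fun y : ℝ => 2*Real.log 3*y) (2*Real.log 3) y := by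
      simpa using (hasDerivAt_id y).const_mul (2*Real.log 3)
    have := (d3.add d1).sub d2
    refine this.congr_deriv ?_
    ring
  have hint : interior (Icc (0:ℝ) (1/2)) = Ioo (0:ℝ) (1/2) := interior_Icc
  have hdiff : DifferentiableOn ℝ f (interior (Icc (0:ℝ) (1/2))) := by
    rw [hint]; intro y hy; exact (hder y hy).differentiableAt.differentiableWithinAt
  have hanti : AntitoneOn (deriv f) (interior (Icc (0:ℝ) (1/2))) := by
    rw [hint]
    intro u hu v hv huv
    rw [(hder u hu).deriv, (hder v hv).deriv]
    obtain ⟨hu0, hu1⟩ := hu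
    obtain ⟨hv0, hv1⟩ := hv
    have h1u : (0:ℝ) < 1 - u := by linarith
    have h2u : (0:ℝ) < 1 + u := by linarith
    have h1v : (0:ℝ) < 1 - v := by linarith
    have h2v : (0:ℝ) < 1 + v := by linarith
    have e1 : (1-u)⁻¹ + (1+u)⁻¹ ≤ (1-v)⁻¹ + (1+v)⁻¹ := by
      rw [inv_add_inv h1u.ne' h2u.ne', inv_add_inv h1v.ne' h2v.ne',
        div_le_div_iff₀ (by positivity) (by positivity)]
      nlinarith
    linarith
  have hconc : ConcaveOn ℝ (Icc (0:ℝ) (1/2)) f :=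
    AntitoneOn.concaveOn_of_deriv (convex_Icc _ _) hcont hdiff hanti
  have h0m : (0:ℝ) ∈ Icc (0:ℝ) (1/2) := by norm_num
  have h1m : (1/2:ℝ) ∈ Icc (0:ℝ) (1/2) := by norm_num
  have := hconc.2 h0m h1m (by linarith : (0:ℝ) ≤ 1 - 2*x) (by linarith : (0:ℝ) ≤ 2*x)
    (by ring : (1 - 2*x) + 2*x = 1)
  have hf0 : f 0 = 0 := by simp [hf]
  have hfh : f (1/2) = 0 := by
    have : (1:ℝ) - 1/2 = 1/2 := by norm_num
    have h32 : (1:ℝ) + 1/2 = 3/2 := by norm_num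
    simp only [hf, this, h32]
    rw [show (1/2:ℝ) = 2⁻¹ by norm_num, Real.log_inv,
      show (3/2:ℝ) = 3 * 2⁻¹ by norm_num, Real.log_mul (by norm_num) (by norm_num),
      Real.log_inv]
    ring
  rw [hf0, hfh] at this
  have hx : (1 - 2*x) • (0:ℝ) + (2*x) • (1/2:ℝ) = x := by
    simp [smul_eq_mul]; ring
  rw [hx] at this
  simp only [smul_eq_mul, mul_zero, add_zero, zero_add] at this
  simp only [hf] at this
  linarith

lemma aux_inv (ε : ℝ) (h0 : 0 < ε) (h1 : ε < 1) : (1+ε)⁻¹ ≤ 1 - ε/2 := by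
  rw [inv_eq_one_div, div_le_iff₀ (by linarith : (0:ℝ) < 1+ε)]
  nlinarith

lemma aux_ab (ε d kk a b : ℝ) (hε0 : 0 < ε) (hε1 : ε < 1) (hd : 0 < d)
    (hek : ε / kk ≤ ε / 2) (hb : b = (1 - ε / kk) * d) (hab : a = b + ε * d) :
    a * (1 - ε/2) ≤ b * (1 + ε/2) := by
  subst hab; subst hb; nlinarith [mul_pos hε0 hd]

/-- With `a := (1 + (1 − 1/k)ε)d`, `b := (1 − ε/k)d`, `n > a`,
`γ ∈ [0,1]`, `atil := a^γ b^{1−γ}`, `btil := b`, and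
`Rtil := (ã/n)(1 − b̃/n) / ((b̃/n)(1 − ã/n))`, we have
`γε/2 ≤ log Rtil ≤ γ ε log 3 + a/(n − a)`. -/
theorem stmt_4 (k : ℕ) (hk : 2 ≤ k) (ε d : ℝ) (hε0 : 0 < ε) (hε1 : ε < 1) (hd : 0 < d)
    (γ : ℝ) (hγ0 : 0 ≤ γ) (hγ1 : γ ≤ 1)
    (a b atil btil Rtil n : ℝ)
    (hn : a < n)
    (ha : a = (1 + (1 - 1 / (k : ℝ)) * ε) * d)
    (hb : b = (1 - ε / (k : ℝ)) * d)
    (hatil : atil = a ^ γ * b ^ (1 - γ))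
    (hbtil : btil = b)
    (hRtil : Rtil = (atil / n) * (1 - btil / n) / ((btil / n) * (1 - atil / n))) :
    γ * ε / 2 ≤ Real.log Rtil ∧ Real.log Rtil ≤ γ * ε * Real.log 3 + a / (n - a) := by
  have hk2 : (2:ℝ) ≤ (k:ℝ) := by exact_mod_cast hk
  have hkpos : (0:ℝ) < (k:ℝ) := by linarith
  have hek : ε / (k:ℝ) ≤ ε / 2 := by
    apply div_le_div_of_nonneg_left hε0.le (by norm_num) hk2
  have hek0 : 0 < ε / (k:ℝ) := div_pos hε0 hkpos
  have hb_pos : 0 < b := by rw [hb]; nlinarith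
  have hbd : b ≤ d := by rw [hb]; nlinarith
  have hab : a = b + ε * d := by rw [ha, hb]; ring
  have hba : b ≤ a := by nlinarith
  have ha_pos : 0 < a := lt_of_lt_of_le hb_pos hba
  have hn_pos : 0 < n := lt_trans ha_pos hn
  have hnb : b < n := lt_of_le_of_lt hba hn
  have hna : 0 < n - a := by linarith
  -- atil bounds
  have hatil_pos : 0 < atil := by
    rw [hatil]; positivity
  have hatil_le : atil ≤ a := by
    rw [hatil]
    calc a ^ γ * b ^ (1-γ) ≤ a ^ γ * a ^ (1-γ) := by
          apply mul_le_mul_of_nonneg_left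
            (Real.rpow_le_rpow hb_pos.le hba (by linarith))
            (Real.rpow_nonneg ha_pos.le γ)
      _ = a := by
          rw [← Real.rpow_add ha_pos]; simp
  have hatil_ge : b ≤ atil := by
    rw [hatil]
    calc b = b ^ γ * b ^ (1-γ) := by rw [← Real.rpow_add hb_pos]; simp
      _ ≤ a ^ γ * b ^ (1-γ) := by
          apply mul_le_mul_of_nonneg_right
            (Real.rpow_le_rpow hb_pos.le hba hγ0)
            (Real.rpow_nonneg hb_pos.le _)
  have hnatil : 0 < n - atil := by linarith
  -- simplify Rtil
  have hR : Rtil = (atil * (n - b)) / (b * (n - atil)) := by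
    rw [hRtil, hbtil]
    field_simp
  have hlogR : Real.log Rtil
      = (Real.log atil - Real.log b) + (Real.log (n-b) - Real.log (n-atil)) := by
    rw [hR, Real.log_div (mul_pos hatil_pos (by linarith : (0:ℝ) < n - b)).ne'
        (mul_pos hb_pos hnatil).ne',
      Real.log_mul hatil_pos.ne' (by linarith : (0:ℝ) < n - b).ne',
      Real.log_mul hb_pos.ne' hnatil.ne']
    ring
  have hlogatil : Real.log atil = γ * Real.log a + (1-γ) * Real.log b := by
    rw [hatil, Real.log_mul (by positivity) (by positivity),
      Real.log_rpow ha_pos, Real.log_rpow hb_pos]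
  have hL : Real.log atil - Real.log b = γ * (Real.log a - Real.log b) := by
    rw [hlogatil]; ring
  -- lower bound on log a - log b
  have hL_lo : ε / 2 ≤ Real.log a - Real.log b := by
    have h1 : (1+ε) * b ≤ a := by nlinarith
    have h2 : Real.log ((1+ε) * b) ≤ Real.log a := Real.log_le_log (by positivity) h1
    rw [Real.log_mul (by linarith : (0:ℝ) < 1+ε).ne' hb_pos.ne'] at h2
    have h3 : Real.log ((1+ε)⁻¹) ≤ (1+ε)⁻¹ - 1 :=
      Real.log_le_sub_one_of_pos (by positivity)
    rw [Real.log_inv] at h3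
    have h4 : (1+ε)⁻¹ ≤ 1 - ε/2 := aux_inv ε hε0 hε1
    linarith
  -- upper bound on log a - log b
  have hL_hi : Real.log a - Real.log b ≤ ε * Real.log 3 := by
    have hhalf : (0:ℝ) < 1 - ε/2 := by linarith
    have h1 : a * (1 - ε/2) ≤ b * (1 + ε/2) :=
      aux_ab ε d (k:ℝ) a b hε0 hε1 hd hek hb hab
    have h2 : a ≤ b * ((1 + ε/2) / (1 - ε/2)) := by
      rw [← mul_div_assoc, le_div_iff₀ hhalf]
      exact h1
    have h3 : Real.log a ≤ Real.log b + (Real.log (1+ε/2) - Real.log (1-ε/2)) := by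
      have := Real.log_le_log ha_pos h2
      rwa [Real.log_mul hb_pos.ne' (by positivity),
        Real.log_div (by linarith : (0:ℝ) < 1+ε/2).ne' hhalf.ne'] at this
    have h4 := key_artanh (ε/2) (by linarith) (by linarith)
    have he : 2 * (ε/2) * Real.log 3 = ε * Real.log 3 := by ring
    rw [he] at h4
    linarith
  -- second part bounds
  have hS_lo : 0 ≤ Real.log (n-b) - Real.log (n-atil) := by
    have := Real.log_le_log hnatil (by linarith : n - atil ≤ n - b)
    linarith
  have hS_hi : Real.log (n-b) - Real.log (n-atil) ≤ a / (n-a) := by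
    have h1 : Real.log ((n-b)/(n-atil)) ≤ (n-b)/(n-atil) - 1 :=
      Real.log_le_sub_one_of_pos (div_pos (by linarith) hnatil)
    rw [Real.log_div (by linarith : (0:ℝ) < n-b).ne' hnatil.ne'] at h1
    have h2 : (n-b)/(n-atil) - 1 = (atil - b)/(n-atil) := by
      field_simp
      ring
    have h3 : (atil - b)/(n-atil) ≤ a/(n-a) :=
      div_le_div₀ ha_pos.le (by linarith) hna (by linarith)
    linarith
  constructor
  · rw [hlogR, hL]
    linarith [mul_le_mul_of_nonneg_left hL_lo hγ0, hS_lo]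
  · rw [hlogR, hL]
    linarith [mul_le_mul_of_nonneg_left hL_hi hγ0, hS_hi]
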